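/- Let G ~ G(n, p_n) with p_n = n^{-α} for fixed 2/3 < α < 1, and let β = (α + 2/3)/2. Then with probability tending to 1 as n → ∞, there exists an integer k ≤ n^{1-β} such that at least n^β/2 vertices v have N₁(v) equal to a star of degree exactly k (i.e., v has degree k and no two neighbors of v are adjacent). -/

import Mathlib

open MeasureTheory ProbabilityTheory
open scoped ENNReal

/-- The Erdős–Rényi measure `G(n, p)`: each potential edge (unordered pair of vertices)
is present independently with probability `p`. -/
noncomputable def erMeasure (n : ℕ) (p : ℝ≥0∞) : Measure (Sym2 (Fin n) → Bool) :=
  Measure.pi fun _ => (PMF.bernoulli (min p 1).toNNReal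
    (by simpa using ENNReal.toNNReal_mono ENNReal.one_ne_top (min_le_right p 1))).toMeasure

/-- The simple graph determined by an edge-indicator configuration `ω`. -/
def graphOf (n : ℕ) (ω : Sym2 (Fin n) → Bool) : SimpleGraph (Fin n) where
  Adj x y := x ≠ y ∧ ω s(x, y) = true
  symm := by
    refine ⟨?_⟩
    intro x y h
    exact ⟨h.1.symm, by rw [Sym2.eq_swap]; exact h.2⟩
  loopless := by refine ⟨?_⟩; intro x h; exact h.1 rfl

instance (n : ℕ) (ω : Sym2 (Fin n) → Bool) : DecidableRel (graphOf n ω).Adj :=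
  fun x y => inferInstanceAs (Decidable (x ≠ y ∧ ω s(x, y) = true))

/-- `N₁(v)` is a star of degree `k`: `v` has degree `k` and no two neighbors of `v`
are adjacent. -/
def isStarOfDegree (n : ℕ) (ω : Sym2 (Fin n) → Bool) (v : Fin n) (k : ℕ) : Prop :=
  (graphOf n ω).degree v = k ∧
    ∀ a b : Fin n, (graphOf n ω).Adj v a → (graphOf n ω).Adj v b →
      ¬ (graphOf n ω).Adj a b

namespace ManyStars

instance (n : ℕ) (p : ℝ≥0∞) : IsProbabilityMeasure (erMeasure n p) := by
  unfold erMeasure; infer_instance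

lemma cylinderProb (n : ℕ) (p : ℝ≥0∞) (S : Finset (Sym2 (Fin n))) :
    erMeasure n p {ω | ∀ e ∈ S, ω e = true} = (min p 1) ^ S.card := by
  have hb : (PMF.bernoulli (min p 1).toNNReal
    (by simpa using ENNReal.toNNReal_mono ENNReal.one_ne_top (min_le_right p 1))).toMeasure {true} = min p 1 := by
    rw [PMF.toMeasure_apply_singleton _ _ (measurableSet_singleton _)]
    exact (PMF.bernoulli_apply _ _).trans
      (ENNReal.coe_toNNReal (ne_top_of_le_ne_top ENNReal.one_ne_top (min_le_right _ _)))
  have hset : {ω : Sym2 (Fin n) → Bool | ∀ e ∈ S, ω e = true} =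
      Set.pi Set.univ (fun e => if e ∈ S then ({true} : Set Bool) else Set.univ) := by
    ext ω
    simp only [Set.mem_setOf_eq, Set.mem_pi, Set.mem_univ, forall_true_left]
    constructor
    · intro h e
      by_cases he : e ∈ S <;> simp [he, h]
    · intro h e he
      have := h e
      simp [he] at this
      exact this
  rw [erMeasure, hset, Measure.pi_pi, ← Finset.prod_mul_prod_compl S]
  have h1 : ∏ i ∈ S, (PMF.bernoulli (min p 1).toNNReal
    (by simpa using ENNReal.toNNReal_mono ENNReal.one_ne_top (min_le_right p 1))).toMeasure
      (if i ∈ S then ({true} : Set Bool) else Set.univ) = (min p 1) ^ S.card := by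
    rw [Finset.prod_congr rfl (fun i hi => by rw [if_pos hi, hb]), Finset.prod_const]
  have h2 : ∏ i ∈ Sᶜ, (PMF.bernoulli (min p 1).toNNReal
    (by simpa using ENNReal.toNNReal_mono ENNReal.one_ne_top (min_le_right p 1))).toMeasure
      (if i ∈ S then ({true} : Set Bool) else Set.univ) = 1 := by
    apply Finset.prod_eq_one
    intro i hi
    rw [if_neg (Finset.mem_compl.mp hi)]
    exact measure_univ
  rw [h1, h2, mul_one]

/-- sum of degrees -/
def Xc (n : ℕ) (ω : Sym2 (Fin n) → Bool) : ℕ := ∑ v : Fin n, (graphOf n ω).degree v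

/-- apex-first triangle count -/
def Yc (n : ℕ) (ω : Sym2 (Fin n) → Bool) : ℕ :=
  ∑ v : Fin n, ∑ bc : Fin n × Fin n,
    if (graphOf n ω).Adj v bc.1 ∧ (graphOf n ω).Adj v bc.2 ∧ (graphOf n ω).Adj bc.1 bc.2
    then 1 else 0

lemma lint_ind (n : ℕ) (p : ℝ≥0∞) (P : (Sym2 (Fin n) → Bool) → Prop) [DecidablePred P] :
    ∫⁻ ω, (if P ω then (1:ℝ≥0∞) else 0) ∂ erMeasure n p = erMeasure n p {ω | P ω} := by
  have h : ∀ ω, (if P ω then (1:ℝ≥0∞) else 0) = {ω | P ω}.indicator 1 ω := by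
    intro ω; simp [Set.indicator_apply]
  simp_rw [h]
  exact lintegral_indicator_one MeasurableSet.of_discrete

lemma adj_prob_le (n : ℕ) (p : ℝ≥0∞) (v u : Fin n) :
    erMeasure n p {ω | (graphOf n ω).Adj v u} ≤ min p 1 := by
  by_cases hvu : v = u
  · have h : {ω : Sym2 (Fin n) → Bool | (graphOf n ω).Adj v u} = ∅ := by
      ext ω; simp [graphOf, hvu]
    simp [h]
  · have h : {ω : Sym2 (Fin n) → Bool | (graphOf n ω).Adj v u} =
        {ω | ∀ e ∈ ({s(v,u)} : Finset (Sym2 (Fin n))), ω e = true} := by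
      ext ω; simp [graphOf, hvu]
    rw [h, cylinderProb]
    simp

lemma tri_prob_le (n : ℕ) (p : ℝ≥0∞) (v b c : Fin n) :
    erMeasure n p {ω | (graphOf n ω).Adj v b ∧ (graphOf n ω).Adj v c ∧ (graphOf n ω).Adj b c}
      ≤ (min p 1) ^ 3 := by
  by_cases hd : v ≠ b ∧ v ≠ c ∧ b ≠ c
  · obtain ⟨h1, h2, h3⟩ := hd
    have hset : {ω : Sym2 (Fin n) → Bool |
        (graphOf n ω).Adj v b ∧ (graphOf n ω).Adj v c ∧ (graphOf n ω).Adj b c} =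
        {ω | ∀ e ∈ ({s(v,b), s(v,c), s(b,c)} : Finset (Sym2 (Fin n))), ω e = true} := by
      ext ω
      simp [graphOf, h1, h2, h3]
    rw [hset, cylinderProb]
    have hcard : ({s(v,b), s(v,c), s(b,c)} : Finset (Sym2 (Fin n))).card = 3 := by
      rw [Finset.card_insert_of_notMem (by simp [Sym2.eq_iff]; tauto),
        Finset.card_insert_of_notMem (by simp [Sym2.eq_iff]; tauto), Finset.card_singleton]
    rw [hcard]
  · have hset : {ω : Sym2 (Fin n) → Bool |
        (graphOf n ω).Adj v b ∧ (graphOf n ω).Adj v c ∧ (graphOf n ω).Adj b c} = ∅ := by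
      ext ω
      simp only [Set.mem_setOf_eq, Set.mem_empty_iff_false, iff_false]
      rintro ⟨ha1, ha2, ha3⟩
      exact hd ⟨ha1.1, ha2.1, ha3.1⟩
    simp [hset]

lemma degree_cast (n : ℕ) (ω : Sym2 (Fin n) → Bool) (v : Fin n) :
    ((graphOf n ω).degree v : ℝ≥0∞) =
      ∑ u : Fin n, (if (graphOf n ω).Adj v u then (1:ℝ≥0∞) else 0) := by
  have h : (graphOf n ω).degree v = ∑ u : Fin n, if (graphOf n ω).Adj v u then 1 else 0 := by
    rw [← Finset.card_filter, ← SimpleGraph.neighborFinset_eq_filter]; rfl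
  rw [h]
  push_cast [apply_ite (Nat.cast : ℕ → ℝ≥0∞)]
  rfl

lemma EX (n : ℕ) (p : ℝ≥0∞) :
    ∫⁻ ω, (Xc n ω : ℝ≥0∞) ∂ erMeasure n p ≤ (n:ℝ≥0∞) * n * min p 1 := by
  have h1 : ∀ ω : Sym2 (Fin n) → Bool, (Xc n ω : ℝ≥0∞) =
      ∑ vu : Fin n × Fin n, (if (graphOf n ω).Adj vu.1 vu.2 then (1:ℝ≥0∞) else 0) := by
    intro ω
    rw [Xc, Nat.cast_sum, Fintype.sum_prod_type]
    exact Finset.sum_congr rfl fun v _ => degree_cast n ω v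
  simp_rw [h1]
  rw [lintegral_finset_sum _ (fun _ _ => Measurable.of_discrete)]
  calc ∑ vu : Fin n × Fin n,
        ∫⁻ ω, (if (graphOf n ω).Adj vu.1 vu.2 then (1:ℝ≥0∞) else 0) ∂ erMeasure n p
      = ∑ vu : Fin n × Fin n, erMeasure n p {ω | (graphOf n ω).Adj vu.1 vu.2} := by
        exact Finset.sum_congr rfl fun vu _ => lint_ind n p _
    _ ≤ ∑ _vu : Fin n × Fin n, min p 1 :=
        Finset.sum_le_sum fun vu _ => adj_prob_le n p vu.1 vu.2
    _ = (n:ℝ≥0∞) * n * min p 1 := by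
        rw [Finset.sum_const, Finset.card_univ, Fintype.card_prod, Fintype.card_fin,
          nsmul_eq_mul, Nat.cast_mul]

lemma EY (n : ℕ) (p : ℝ≥0∞) :
    ∫⁻ ω, (Yc n ω : ℝ≥0∞) ∂ erMeasure n p ≤ (n:ℝ≥0∞) * n * n * (min p 1) ^ 3 := by
  have h1 : ∀ ω : Sym2 (Fin n) → Bool, (Yc n ω : ℝ≥0∞) =
      ∑ t : Fin n × Fin n × Fin n,
        (if (graphOf n ω).Adj t.1 t.2.1 ∧ (graphOf n ω).Adj t.1 t.2.2 ∧
            (graphOf n ω).Adj t.2.1 t.2.2 then (1:ℝ≥0∞) else 0) := by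
    intro ω
    rw [Yc, Nat.cast_sum, Fintype.sum_prod_type]
    refine Finset.sum_congr rfl fun v _ => ?_
    rw [Nat.cast_sum]
    push_cast [apply_ite (Nat.cast : ℕ → ℝ≥0∞)]
    rfl
  simp_rw [h1]
  rw [lintegral_finset_sum _ (fun _ _ => Measurable.of_discrete)]
  calc ∑ t : Fin n × Fin n × Fin n,
        ∫⁻ ω, (if (graphOf n ω).Adj t.1 t.2.1 ∧ (graphOf n ω).Adj t.1 t.2.2 ∧
            (graphOf n ω).Adj t.2.1 t.2.2 then (1:ℝ≥0∞) else 0) ∂ erMeasure n p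
      = ∑ t : Fin n × Fin n × Fin n, erMeasure n p {ω | (graphOf n ω).Adj t.1 t.2.1 ∧
          (graphOf n ω).Adj t.1 t.2.2 ∧ (graphOf n ω).Adj t.2.1 t.2.2} := by
        exact Finset.sum_congr rfl fun t _ => lint_ind n p _
    _ ≤ ∑ _t : Fin n × Fin n × Fin n, (min p 1) ^ 3 :=
        Finset.sum_le_sum fun t _ => tri_prob_le n p t.1 t.2.1 t.2.2
    _ = (n:ℝ≥0∞) * n * n * (min p 1) ^ 3 := by
        rw [Finset.sum_const, Finset.card_univ, Fintype.card_prod, Fintype.card_prod,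
          Fintype.card_fin, nsmul_eq_mul]
        push_cast
        ring

lemma markov (n : ℕ) (p : ℝ≥0∞) (f : (Sym2 (Fin n) → Bool) → ℕ) (c : ℕ) (hc : c ≠ 0) :
    erMeasure n p {ω | c ≤ f ω} ≤ (∫⁻ ω, (f ω : ℝ≥0∞) ∂ erMeasure n p) / c := by
  have h := meas_ge_le_lintegral_div (μ := erMeasure n p) (f := fun ω => (f ω : ℝ≥0∞))
    Measurable.of_discrete.aemeasurable (ε := (c:ℝ≥0∞))
    (by exact_mod_cast hc) (by simp)
  have hset : {ω : Sym2 (Fin n) → Bool | (c:ℝ≥0∞) ≤ (f ω : ℝ≥0∞)} = {ω | c ≤ f ω} := by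
    ext ω; simp [Nat.cast_le]
  rwa [hset] at h

/-- Deterministic pigeonhole step. -/
lemma det (n D T m : ℕ) (ω : Sym2 (Fin n) → Bool)
    (hX : Xc n ω < (D+1)*T) (hY : Yc n ω < T)
    (hm : (D+1)*m + 2*T ≤ n) :
    ∃ k : ℕ, k ≤ D ∧ m ≤ {v : Fin n | isStarOfDegree n ω v k}.ncard := by
  set G := graphOf n ω with hG
  classical
  set star : Fin n → Prop := fun v => G.degree v ≤ D ∧
    ∀ a b : Fin n, G.Adj v a → G.Adj v b → ¬ G.Adj a b with hstar
  set g : Finset (Fin n) := Finset.univ.filter star with hg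
  set badDeg : Finset (Fin n) := Finset.univ.filter (fun v => D + 1 ≤ G.degree v) with hbd
  set badTri : Finset (Fin n) :=
    Finset.univ.filter (fun v => ∃ a b : Fin n, G.Adj v a ∧ G.Adj v b ∧ G.Adj a b) with hbt
  -- bound on badDeg
  have hbd1 : (D+1) * badDeg.card ≤ Xc n ω := by
    calc (D+1) * badDeg.card = ∑ _v ∈ badDeg, (D+1) := by
          rw [Finset.sum_const, smul_eq_mul, mul_comm]
      _ ≤ ∑ v ∈ badDeg, G.degree v :=
          Finset.sum_le_sum fun v hv => (Finset.mem_filter.mp hv).2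
      _ ≤ ∑ v : Fin n, G.degree v :=
          Finset.sum_le_sum_of_subset (Finset.subset_univ _)
      _ = Xc n ω := rfl
  have hbd2 : badDeg.card < T := by
    by_contra hcon
    push_neg at hcon
    have : (D+1) * T ≤ (D+1) * badDeg.card := Nat.mul_le_mul_left _ hcon
    omega
  -- bound on badTri
  have hbt1 : badTri.card ≤ Yc n ω := by
    have hle : ∀ v ∈ badTri, 1 ≤ ∑ bc : Fin n × Fin n,
        if G.Adj v bc.1 ∧ G.Adj v bc.2 ∧ G.Adj bc.1 bc.2 then 1 else 0 := by
      intro v hv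
      obtain ⟨a, b, hab⟩ := (Finset.mem_filter.mp hv).2
      calc 1 = if G.Adj v (a,b).1 ∧ G.Adj v (a,b).2 ∧ G.Adj (a,b).1 (a,b).2 then 1 else 0 := by
            simp [hab.1, hab.2.1, hab.2.2]
        _ ≤ _ := Finset.single_le_sum (f := fun bc : Fin n × Fin n =>
              if G.Adj v bc.1 ∧ G.Adj v bc.2 ∧ G.Adj bc.1 bc.2 then 1 else 0)
              (fun _ _ => Nat.zero_le _) (Finset.mem_univ (a,b))
    calc badTri.card = ∑ _v ∈ badTri, 1 := by rw [Finset.sum_const, smul_eq_mul, mul_one]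
      _ ≤ ∑ v ∈ badTri, ∑ bc : Fin n × Fin n,
            if G.Adj v bc.1 ∧ G.Adj v bc.2 ∧ G.Adj bc.1 bc.2 then 1 else 0 :=
          Finset.sum_le_sum hle
      _ ≤ ∑ v : Fin n, ∑ bc : Fin n × Fin n,
            if G.Adj v bc.1 ∧ G.Adj v bc.2 ∧ G.Adj bc.1 bc.2 then 1 else 0 :=
          Finset.sum_le_sum_of_subset (Finset.subset_univ _)
      _ = Yc n ω := rfl
  have hbt2 : badTri.card < T := lt_of_le_of_lt hbt1 hY
  -- the good set is large
  have hsplit : g.card + (Finset.univ.filter (fun v => ¬ star v)).card = n := by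
    rw [Finset.card_filter_add_card_filter_not, Finset.card_univ, Fintype.card_fin]
  have hbadsub : (Finset.univ.filter (fun v => ¬ star v)) ⊆ badDeg ∪ badTri := by
    intro v hv
    have hnv := (Finset.mem_filter.mp hv).2
    by_cases hdeg : G.degree v ≤ D
    · have hne : ¬ ∀ a b : Fin n, G.Adj v a → G.Adj v b → ¬ G.Adj a b :=
        fun h => hnv ⟨hdeg, h⟩
      push_neg at hne
      obtain ⟨a, b, ha, hb, hab⟩ := hne
      exact Finset.mem_union_right _ (Finset.mem_filter.mpr ⟨Finset.mem_univ _,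
        a, b, ha, hb, hab⟩)
    · exact Finset.mem_union_left _ (Finset.mem_filter.mpr ⟨Finset.mem_univ _, by omega⟩)
  have hbadcard : (Finset.univ.filter (fun v => ¬ star v)).card ≤ 2 * T := by
    calc (Finset.univ.filter (fun v => ¬ star v)).card ≤ (badDeg ∪ badTri).card :=
          Finset.card_le_card hbadsub
      _ ≤ badDeg.card + badTri.card := Finset.card_union_le _ _
      _ ≤ 2 * T := by omega
  have hgood : (D+1) * m ≤ g.card := by omega
  -- pigeonhole
  obtain ⟨k, hk, hfib⟩ := Finset.exists_le_card_fiber_of_mul_le_card_of_maps_to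
    (s := g) (t := Finset.range (D+1)) (f := fun v => G.degree v)
    (fun v hv => Finset.mem_range.mpr (Nat.lt_succ_of_le (Finset.mem_filter.mp hv).2.1))
    ⟨0, Finset.mem_range.mpr (Nat.succ_pos D)⟩
    (by rwa [Finset.card_range])
  refine ⟨k, Nat.lt_succ_iff.mp (Finset.mem_range.mp hk), ?_⟩
  have hsub : ((g.filter (fun v => G.degree v = k) : Finset (Fin n)) : Set (Fin n)) ⊆
      {v : Fin n | isStarOfDegree n ω v k} := by
    intro v hv
    rw [Finset.coe_filter] at hv
    obtain ⟨hvg, hdk⟩ := hv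
    obtain ⟨-, hvs⟩ := Finset.mem_filter.mp hvg
    exact ⟨hdk, hvs.2⟩
  calc m ≤ (g.filter (fun v => G.degree v = k)).card := hfib
    _ = ((g.filter (fun v => G.degree v = k) : Finset (Fin n)) : Set (Fin n)).ncard :=
        (Set.ncard_coe_finset _).symm
    _ ≤ {v : Fin n | isStarOfDegree n ω v k}.ncard :=
        Set.ncard_le_ncard hsub (Set.toFinite _)

lemma ev_rpow_le (c ε : ℝ) (hc : c < 1) (hε : 0 < ε) :
    ∀ᶠ n : ℕ in Filter.atTop, (n:ℝ)^c ≤ ε * n := by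
  have h0 : Filter.Tendsto (fun n : ℕ => (n:ℝ)^(c-1)) Filter.atTop (nhds 0) := by
    have := (tendsto_rpow_neg_atTop (y := 1 - c) (by linarith)).comp
      (tendsto_natCast_atTop_atTop (R := ℝ))
    simpa [Function.comp_def, neg_sub] using this
  have h1 : ∀ᶠ n : ℕ in Filter.atTop, (n:ℝ)^(c-1) < ε := h0.eventually_lt_const hε
  filter_upwards [h1, Filter.eventually_ge_atTop 1] with n hn hn1
  have hnpos : (0:ℝ) < n := by exact_mod_cast hn1
  have heq : (n:ℝ)^c = (n:ℝ)^(c-1) * n := by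
    rw [show c = (c-1)+1 by ring, Real.rpow_add hnpos, Real.rpow_one]
    ring_nf
  rw [heq]
  exact mul_le_mul_of_nonneg_right hn.le (by positivity)

end ManyStars


/-- In `G(n, n^{-α})` with `2/3 < α < 1` and `β = (α + 2/3)/2`, with probability tending
to `1` as `n → ∞`, there exists `k ≤ n^{1-β}` such that at least `n^β/2` vertices `v` have
`N₁(v)` equal to a star of degree exactly `k`. -/
theorem many_stars_of_same_degree (α β : ℝ) (hα0 : 2 / 3 < α) (hα1 : α < 1)
    (hβ : β = (α + 2 / 3) / 2) :
    Filter.Tendsto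
      (fun n : ℕ =>
        (erMeasure n (ENNReal.ofReal ((n : ℝ) ^ (-α)))
          {ω | ∃ k : ℕ, (k : ℝ) ≤ (n : ℝ) ^ (1 - β) ∧
            (n : ℝ) ^ β / 2 ≤ ({v : Fin n | isStarOfDegree n ω v k}.ncard : ℝ)}).toReal)
      Filter.atTop (nhds 1) := by
  classical
  set δ : ℝ := (α - 2/3)/4 with hδdef
  have hδ : 0 < δ := by rw [hδdef]; linarith
  have hβδ : β = α - 2*δ := by rw [hβ, hδdef]; ring
  have hβ0 : 0 < β := by rw [hβ]; linarith
  have hβ1 : β < 1 := by rw [hβ]; linarith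
  let μ : (n : ℕ) → Measure (Sym2 (Fin n) → Bool) :=
    fun n => erMeasure n (ENNReal.ofReal ((n : ℝ) ^ (-α)))
  let M : (n : ℕ) → Set (Sym2 (Fin n) → Bool) := fun n =>
    {ω | ∃ k : ℕ, (k : ℝ) ≤ (n : ℝ) ^ (1 - β) ∧
      (n : ℝ) ^ β / 2 ≤ ({v : Fin n | isStarOfDegree n ω v k}.ncard : ℝ)}
  let B : (n : ℕ) → Set (Sym2 (Fin n) → Bool) := fun n =>
    {ω | (⌊(n:ℝ)^(1-β)⌋₊ + 1) * ⌈(n:ℝ)^(1-δ)⌉₊ ≤ ManyStars.Xc n ω} ∪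
    {ω | ⌈(n:ℝ)^(1-δ)⌉₊ ≤ ManyStars.Yc n ω}
  -- numeric eventuality
  have hnum : ∀ᶠ n : ℕ in Filter.atTop,
      (⌊(n:ℝ)^(1-β)⌋₊ + 1) * ⌈(n:ℝ)^β/2⌉₊ + 2 * ⌈(n:ℝ)^(1-δ)⌉₊ ≤ n := by
    have h24 : ∀ᶠ n : ℕ in Filter.atTop, (3:ℝ) ≤ 1/8 * n := by
      filter_upwards [Filter.eventually_ge_atTop 24] with n hn
      have : (24:ℝ) ≤ n := by exact_mod_cast hn
      linarith
    filter_upwards [ManyStars.ev_rpow_le (1-β) (1/8) (by linarith) (by norm_num),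
      ManyStars.ev_rpow_le β (1/8) (by linarith) (by norm_num),
      ManyStars.ev_rpow_le (1-δ) (1/16) (by linarith) (by norm_num),
      h24, Filter.eventually_ge_atTop 1] with n h1 h2 h3 h4 hn1
    have hnpos : (0:ℝ) < n := by exact_mod_cast hn1
    rw [← Nat.cast_le (α := ℝ)]
    push_cast
    have hD1 : (⌊(n:ℝ)^(1-β)⌋₊ : ℝ) + 1 ≤ (n:ℝ)^(1-β) + 1 := by
      have := Nat.floor_le (Real.rpow_nonneg (Nat.cast_nonneg n) (1-β))
      linarith
    have hm1 : (⌈(n:ℝ)^β/2⌉₊ : ℝ) ≤ (n:ℝ)^β/2 + 1 := (Nat.ceil_lt_add_one (by positivity)).le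
    have hT1 : (⌈(n:ℝ)^(1-δ)⌉₊ : ℝ) ≤ (n:ℝ)^(1-δ) + 1 := (Nat.ceil_lt_add_one (by positivity)).le
    have hkey : (n:ℝ)^(1-β) * (n:ℝ)^β = n := by
      rw [← Real.rpow_add hnpos]
      norm_num
    have hprod : ((⌊(n:ℝ)^(1-β)⌋₊ : ℝ)+1) * (⌈(n:ℝ)^β/2⌉₊ : ℝ) ≤
        ((n:ℝ)^(1-β)+1) * ((n:ℝ)^β/2+1) :=
      mul_le_mul hD1 hm1 (Nat.cast_nonneg _) (by positivity)
    have hexp : ((n:ℝ)^(1-β)+1) * ((n:ℝ)^β/2+1) = (n:ℝ)/2 + (n:ℝ)^(1-β) + (n:ℝ)^β/2 + 1 := by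
      have h : ((n:ℝ)^(1-β)+1) * ((n:ℝ)^β/2+1)
          = (n:ℝ)^(1-β)*(n:ℝ)^β/2 + (n:ℝ)^(1-β) + (n:ℝ)^β/2 + 1 := by ring
      rw [h, hkey]
    linarith
  -- inclusion of the good event
  have hsub : ∀ᶠ n : ℕ in Filter.atTop, (M n)ᶜ ⊆ B n := by
    filter_upwards [hnum] with n hnum_n
    rw [← Set.compl_subset_compl, compl_compl]
    intro ω hω
    simp only [B, Set.mem_union, Set.mem_setOf_eq, not_or, not_le, Set.mem_compl_iff] at hω
    obtain ⟨hX, hY⟩ := hω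
    obtain ⟨k, hk, hcard⟩ := ManyStars.det n ⌊(n:ℝ)^(1-β)⌋₊ ⌈(n:ℝ)^(1-δ)⌉₊ ⌈(n:ℝ)^β/2⌉₊ ω
      hX hY hnum_n
    refine ⟨k, ?_, ?_⟩
    · calc (k:ℝ) ≤ ⌊(n:ℝ)^(1-β)⌋₊ := Nat.cast_le.mpr hk
        _ ≤ (n:ℝ)^(1-β) := Nat.floor_le (Real.rpow_nonneg (Nat.cast_nonneg n) _)
    · calc (n:ℝ)^β/2 ≤ ⌈(n:ℝ)^β/2⌉₊ := Nat.le_ceil _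
        _ ≤ _ := Nat.cast_le.mpr hcard
  -- probability bound
  have hB : ∀ᶠ n : ℕ in Filter.atTop, μ n (B n) ≤ ENNReal.ofReal (2*(n:ℝ)^(-δ)) := by
    filter_upwards [Filter.eventually_ge_atTop 1] with n hn1
    have hnpos : (0:ℝ) < n := by exact_mod_cast hn1
    have hn1' : (1:ℝ) ≤ n := by exact_mod_cast hn1
    have hq : min (ENNReal.ofReal ((n:ℝ)^(-α))) 1 ≤ ENNReal.ofReal ((n:ℝ)^(-α)) :=
      min_le_left _ _
    have hT0 : 0 < ⌈(n:ℝ)^(1-δ)⌉₊ := Nat.ceil_pos.mpr (by positivity)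
    have hc0 : (⌊(n:ℝ)^(1-β)⌋₊ + 1) * ⌈(n:ℝ)^(1-δ)⌉₊ ≠ 0 :=
      Nat.mul_ne_zero (Nat.succ_ne_zero _) hT0.ne'
    have hTden : ENNReal.ofReal ((n:ℝ)^(1-δ)) ≤ ((⌈(n:ℝ)^(1-δ)⌉₊ : ℕ) : ℝ≥0∞) := by
      rw [← ENNReal.ofReal_natCast]
      exact ENNReal.ofReal_le_ofReal (Nat.le_ceil _)
    -- first event
    have hμ1 : μ n {ω | (⌊(n:ℝ)^(1-β)⌋₊ + 1) * ⌈(n:ℝ)^(1-δ)⌉₊ ≤ ManyStars.Xc n ω} ≤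
        ENNReal.ofReal ((n:ℝ)^(-δ)) := by
      have hmk := ManyStars.markov n (ENNReal.ofReal ((n : ℝ) ^ (-α))) (ManyStars.Xc n)
        ((⌊(n:ℝ)^(1-β)⌋₊ + 1) * ⌈(n:ℝ)^(1-δ)⌉₊) hc0
      refine hmk.trans ?_
      have hnum' : (∫⁻ ω, (ManyStars.Xc n ω : ℝ≥0∞) ∂ μ n) ≤
          ENNReal.ofReal ((n:ℝ)^(2-α)) := by
        refine (ManyStars.EX n _).trans ?_
        calc (n:ℝ≥0∞) * n * min (ENNReal.ofReal ((n:ℝ)^(-α))) 1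
            ≤ (n:ℝ≥0∞) * n * ENNReal.ofReal ((n:ℝ)^(-α)) := mul_le_mul_right hq _
          _ = ENNReal.ofReal ((n:ℝ) * n * (n:ℝ)^(-α)) := by
              rw [← ENNReal.ofReal_natCast n, ← ENNReal.ofReal_mul (Nat.cast_nonneg n),
                ← ENNReal.ofReal_mul (by positivity)]
          _ = ENNReal.ofReal ((n:ℝ)^(2-α)) := by
              rw [show (2-α) = 1+1+(-α) by ring, Real.rpow_add hnpos, Real.rpow_add hnpos,
                Real.rpow_one]
      have hden : ENNReal.ofReal ((n:ℝ)^(2-β-δ)) ≤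
          (((⌊(n:ℝ)^(1-β)⌋₊ + 1) * ⌈(n:ℝ)^(1-δ)⌉₊ : ℕ) : ℝ≥0∞) := by
        have hd : (n:ℝ)^(1-β) ≤ (⌊(n:ℝ)^(1-β)⌋₊ : ℝ) + 1 := (Nat.lt_floor_add_one _).le
        have ht : (n:ℝ)^(1-δ) ≤ (⌈(n:ℝ)^(1-δ)⌉₊ : ℝ) := Nat.le_ceil _
        calc ENNReal.ofReal ((n:ℝ)^(2-β-δ))
            = ENNReal.ofReal ((n:ℝ)^(1-β) * (n:ℝ)^(1-δ)) := by
              rw [show (2-β-δ:ℝ) = (1-β)+(1-δ) by ring, Real.rpow_add hnpos]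
          _ ≤ ENNReal.ofReal (((⌊(n:ℝ)^(1-β)⌋₊ : ℝ)+1) * (⌈(n:ℝ)^(1-δ)⌉₊ : ℝ)) :=
              ENNReal.ofReal_le_ofReal
                (mul_le_mul hd ht (by positivity) (by positivity))
          _ = (((⌊(n:ℝ)^(1-β)⌋₊ + 1) * ⌈(n:ℝ)^(1-δ)⌉₊ : ℕ) : ℝ≥0∞) := by
              rw [← ENNReal.ofReal_natCast]
              congr 1
              push_cast
              ring
      calc (∫⁻ ω, (ManyStars.Xc n ω : ℝ≥0∞) ∂ μ n) /
            (((⌊(n:ℝ)^(1-β)⌋₊ + 1) * ⌈(n:ℝ)^(1-δ)⌉₊ : ℕ) : ℝ≥0∞)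
          ≤ ENNReal.ofReal ((n:ℝ)^(2-α)) / ENNReal.ofReal ((n:ℝ)^(2-β-δ)) :=
            ENNReal.div_le_div hnum' hden
        _ = ENNReal.ofReal ((n:ℝ)^(2-α) / (n:ℝ)^(2-β-δ)) :=
            (ENNReal.ofReal_div_of_pos (by positivity)).symm
        _ = ENNReal.ofReal ((n:ℝ)^(-δ)) := by
            rw [← Real.rpow_sub hnpos, show (2-α)-(2-β-δ) = -δ by rw [hβδ]; ring]
    -- second event
    have hμ2 : μ n {ω | ⌈(n:ℝ)^(1-δ)⌉₊ ≤ ManyStars.Yc n ω} ≤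
        ENNReal.ofReal ((n:ℝ)^(-δ)) := by
      have hmk := ManyStars.markov n (ENNReal.ofReal ((n : ℝ) ^ (-α))) (ManyStars.Yc n)
        ⌈(n:ℝ)^(1-δ)⌉₊ hT0.ne'
      refine hmk.trans ?_
      have hpow : ((n:ℝ)^(-α))^(3:ℕ) = (n:ℝ)^(-α*3) := by
        rw [← Real.rpow_natCast ((n:ℝ)^(-α)) 3, ← Real.rpow_mul (le_of_lt hnpos)]
        norm_num
      have hnum' : (∫⁻ ω, (ManyStars.Yc n ω : ℝ≥0∞) ∂ μ n) ≤
          ENNReal.ofReal ((n:ℝ)^(3-3*α)) := by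
        refine (ManyStars.EY n _).trans ?_
        calc (n:ℝ≥0∞) * n * n * (min (ENNReal.ofReal ((n:ℝ)^(-α))) 1)^3
            ≤ (n:ℝ≥0∞) * n * n * (ENNReal.ofReal ((n:ℝ)^(-α)))^3 :=
              mul_le_mul_right (pow_le_pow_left' hq 3) _
          _ = ENNReal.ofReal ((n:ℝ) * n * n * ((n:ℝ)^(-α))^(3:ℕ)) := by
              rw [← ENNReal.ofReal_pow (by positivity), ← ENNReal.ofReal_natCast n,
                ← ENNReal.ofReal_mul (Nat.cast_nonneg n),
                ← ENNReal.ofReal_mul (by positivity), ← ENNReal.ofReal_mul (by positivity)]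
          _ = ENNReal.ofReal ((n:ℝ)^(3-3*α)) := by
              rw [hpow, show (3-3*α) = 1+1+1+(-α*3) by ring, Real.rpow_add hnpos,
                Real.rpow_add hnpos, Real.rpow_add hnpos, Real.rpow_one]
      calc (∫⁻ ω, (ManyStars.Yc n ω : ℝ≥0∞) ∂ μ n) / ((⌈(n:ℝ)^(1-δ)⌉₊ : ℕ) : ℝ≥0∞)
          ≤ ENNReal.ofReal ((n:ℝ)^(3-3*α)) / ENNReal.ofReal ((n:ℝ)^(1-δ)) :=
            ENNReal.div_le_div hnum' hTden
        _ = ENNReal.ofReal ((n:ℝ)^(3-3*α) / (n:ℝ)^(1-δ)) :=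
            (ENNReal.ofReal_div_of_pos (by positivity)).symm
        _ = ENNReal.ofReal ((n:ℝ)^((3-3*α)-(1-δ))) := by rw [← Real.rpow_sub hnpos]
        _ ≤ ENNReal.ofReal ((n:ℝ)^(-δ)) := by
            apply ENNReal.ofReal_le_ofReal
            apply Real.rpow_le_rpow_of_exponent_le hn1'
            have h4δ : 4*δ = α - 2/3 := by rw [hδdef]; ring
            linarith
    calc μ n (B n) ≤
        μ n {ω | (⌊(n:ℝ)^(1-β)⌋₊ + 1) * ⌈(n:ℝ)^(1-δ)⌉₊ ≤ ManyStars.Xc n ω} +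
          μ n {ω | ⌈(n:ℝ)^(1-δ)⌉₊ ≤ ManyStars.Yc n ω} := measure_union_le _ _
      _ ≤ ENNReal.ofReal ((n:ℝ)^(-δ)) + ENNReal.ofReal ((n:ℝ)^(-δ)) := add_le_add hμ1 hμ2
      _ = ENNReal.ofReal (2*(n:ℝ)^(-δ)) := by
          rw [← ENNReal.ofReal_add (by positivity) (by positivity)]
          ring_nf
  -- conclusion
  have hMc : ∀ᶠ n : ℕ in Filter.atTop, μ n ((M n)ᶜ) ≤ ENNReal.ofReal (2*(n:ℝ)^(-δ)) := by
    filter_upwards [hsub, hB] with n h1 h2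
    exact le_trans (measure_mono h1) h2
  have h0 : Filter.Tendsto (fun n => (μ n ((M n)ᶜ)).toReal) Filter.atTop (nhds 0) := by
    apply squeeze_zero' (Filter.Eventually.of_forall fun n => ENNReal.toReal_nonneg)
    · filter_upwards [hMc] with n hn
      exact ENNReal.toReal_le_of_le_ofReal (by positivity) hn
    · have h := (tendsto_rpow_neg_atTop hδ).comp (tendsto_natCast_atTop_atTop (R := ℝ))
      have h2 := h.const_mul (2:ℝ)
      simpa using h2
  have heq : ∀ n, (μ n (M n)).toReal = 1 - (μ n ((M n)ᶜ)).toReal := by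
    intro n
    have h1 : μ n (M n) + μ n ((M n)ᶜ) = 1 := by
      rw [measure_add_measure_compl MeasurableSet.of_discrete, measure_univ]
    have h2 := congrArg ENNReal.toReal h1
    rw [ENNReal.toReal_add (measure_ne_top _ _) (measure_ne_top _ _)] at h2
    simp only [ENNReal.toReal_one] at h2
    linarith
  have hfin : Filter.Tendsto (fun n => 1 - (μ n ((M n)ᶜ)).toReal) Filter.atTop (nhds 1) := by
    simpa using tendsto_const_nhds.sub h0
  exact hfin.congr fun n => (heq n).symm
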